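/- arXiv:1208.2130 — 2 statements merged into one kernel-verified Lean document; each statement's English description precedes it below -/
import Mathlib

section
/- Let M be a metric space, L ≥ 1, and f : M → ℝ^d a map satisfying L⁻¹·d_M(x,y) ≤ ‖f(x) − f(y)‖ ≤ L·d_M(x,y) for all x,y ∈ M (in particular f is injective). Let C ⊆ M be a finite subset with at least two elements, let δ ∈ (0,1), and let s > 0. If w ∈ C is (δ,s)-supported in C (with respect to the metric of M), then f(w) is (δ/(2L²), s)-supported in the finite set f(C) ⊆ ℝ^d (with respect to the Euclidean metric). -/
/-- The isolation radius of `w` in the finite set `C`: the minimal distance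
from `w` to a different point of `C`. -/
noncomputable def isolationRadius {M : Type*} [MetricSpace M] (C : Set M) (w : M) : ℝ :=
  sInf {r : ℝ | ∃ z ∈ C, z ≠ w ∧ r = dist w z}

/-- `w` is `(δ,s)`-supported in `C`: for every `p`, the set
`C ∩ (B(w, δ⁻¹ρ) \ B(p, δρ))` has at least `s` points, where `ρ` is the isolation
radius of `w` in `C` and balls are closed. -/
def IsSupported {M : Type*} [MetricSpace M] (C : Set M) (δ s : ℝ) (w : M) : Prop :=
  ∀ p : M,
    s ≤ ((C ∩ (Metric.closedBall w (δ⁻¹ * isolationRadius C w) \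
        Metric.closedBall p (δ * isolationRadius C w))).ncard : ℝ)

/-- If `f : M → ℝ^d` is an `L`-bilipschitz embedding and `w ∈ C` is `(δ,s)`-supported
in `C ⊆ M`, then `f w` is `(δ/(2L²), s)`-supported in `f(C) ⊆ ℝ^d`. -/
theorem supported_image_bilipschitz {M : Type*} [MetricSpace M] (d : ℕ) (L : ℝ) (hL : 1 ≤ L)
    (f : M → EuclideanSpace ℝ (Fin d))
    (hf : ∀ x y : M, L⁻¹ * dist x y ≤ ‖f x - f y‖ ∧ ‖f x - f y‖ ≤ L * dist x y)
    (C : Set M) (hCfin : C.Finite) (hC2 : 2 ≤ C.ncard)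
    (δ s : ℝ) (hδ0 : 0 < δ) (hδ1 : δ < 1) (hs : 0 < s)
    (w : M) (hw : w ∈ C) (hsupp : IsSupported C δ s w) :
    IsSupported (f '' C) (δ / (2 * L ^ 2)) s (f w) := by
  have hL0 : (0:ℝ) < L := lt_of_lt_of_le one_pos hL
  have hinj : Function.Injective f := by
    intro x y hxy
    by_contra hne
    have h1 := (hf x y).1
    rw [hxy, sub_self, norm_zero] at h1
    have hd : 0 < dist x y := dist_pos.mpr hne
    have : 0 < L⁻¹ * dist x y := by positivity
    linarith
  set ρ := isolationRadius C w with hρdef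
  set ρ' := isolationRadius (f '' C) (f w) with hρ'def
  set δ' := δ / (2 * L ^ 2) with hδ'def
  have hδ'0 : 0 < δ' := by positivity
  -- the set defining ρ
  set A := {r : ℝ | ∃ z ∈ C, z ≠ w ∧ r = dist w z} with hAdef
  obtain ⟨z₀, hz₀C, hz₀ne⟩ := Set.exists_ne_of_one_lt_ncard (show 1 < C.ncard by omega) w
  have hAfin : A.Finite := by
    apply (hCfin.image (dist w)).subset
    rintro r ⟨z, hz, _, rfl⟩; exact ⟨z, hz, rfl⟩
  have hAne : A.Nonempty := ⟨dist w z₀, z₀, hz₀C, hz₀ne, rfl⟩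
  have hρmem : ρ ∈ A := hAne.csInf_mem hAfin
  have hρle : ∀ z ∈ C, z ≠ w → ρ ≤ dist w z := fun z hz hne =>
    csInf_le hAfin.bddBelow ⟨z, hz, hne, rfl⟩
  obtain ⟨z₁, hz₁C, hz₁ne, hρeq⟩ := hρmem
  have hρpos : 0 < ρ := by rw [hρeq]; exact dist_pos.mpr (Ne.symm hz₁ne)
  -- the set defining ρ'
  set A' := {r : ℝ | ∃ y ∈ f '' C, y ≠ f w ∧ r = dist (f w) y} with hA'def
  have hA'fin : A'.Finite := by
    apply ((hCfin.image f).image (dist (f w))).subset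
    rintro r ⟨y, hy, _, rfl⟩; exact ⟨y, hy, rfl⟩
  have hA'ne : A'.Nonempty := by
    refine ⟨dist (f w) (f z₀), ?_⟩
    exact ⟨f z₀, ⟨z₀, hz₀C, rfl⟩, fun h => hz₀ne (hinj h), rfl⟩
  have hρ'mem : ρ' ∈ A' := hA'ne.csInf_mem hA'fin
  obtain ⟨y₂, ⟨z₂, hz₂C, rfl⟩, hy₂ne, hρ'eq⟩ := hρ'mem
  have hz₂ne : z₂ ≠ w := fun h => hy₂ne (by rw [h])
  have hdistfw : ∀ x y : M, dist (f x) (f y) = ‖f x - f y‖ := fun x y => dist_eq_norm _ _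
  -- bounds on ρ'
  have hρ'ge : L⁻¹ * ρ ≤ ρ' := by
    have h1 := (hf w z₂).1
    have h2 := hρle z₂ hz₂C hz₂ne
    rw [hρ'eq, hdistfw]
    calc L⁻¹ * ρ ≤ L⁻¹ * dist w z₂ := by
          apply mul_le_mul_of_nonneg_left h2 (by positivity)
      _ ≤ ‖f w - f z₂‖ := h1
  have hρ'le : ρ' ≤ L * ρ := by
    have h2 := (hf w z₁).2
    have hle : ρ' ≤ dist (f w) (f z₁) :=
      csInf_le hA'fin.bddBelow ⟨f z₁, ⟨z₁, hz₁C, rfl⟩, fun h => hz₁ne (hinj h), rfl⟩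
    rw [hρeq]
    calc ρ' ≤ dist (f w) (f z₁) := hle
      _ = ‖f w - f z₁‖ := hdistfw _ _
      _ ≤ L * dist w z₁ := h2
  have hρ'pos : 0 < ρ' := lt_of_lt_of_le (by positivity) hρ'ge
  -- key inequalities
  have hkey1 : δ' * ρ' ≤ δ * ρ / (2 * L) := by
    rw [hδ'def]
    rw [div_mul_eq_mul_div, div_le_div_iff₀ (by positivity) (by positivity)]
    nlinarith [mul_le_mul_of_nonneg_left hρ'le (le_of_lt hδ0)]
  have hkey2 : L * (δ⁻¹ * ρ) ≤ δ'⁻¹ * ρ' := by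
    rw [hδ'def, inv_div]
    have h1 : L * (δ⁻¹ * ρ) = (L * ρ) / δ := by field_simp
    have h2 : 2 * L ^ 2 / δ * ρ' = (2 * L * (L * ρ')) / δ := by ring
    have hρLρ' : ρ ≤ L * ρ' := by
      calc ρ = L * (L⁻¹ * ρ) := by field_simp
        _ ≤ L * ρ' := mul_le_mul_of_nonneg_left hρ'ge hL0.le
    rw [h1, h2, div_le_div_iff_of_pos_right hδ0]
    nlinarith
  -- main argument
  intro p
  obtain ⟨q, hqC, hq⟩ : ∃ q ∈ C, ∀ x ∈ C, δ * ρ < dist x q → δ' * ρ' < dist (f x) p := by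
    by_cases hcase : ∃ q ∈ C, dist p (f q) ≤ δ' * ρ'
    · obtain ⟨q, hqC, hqp⟩ := hcase
      refine ⟨q, hqC, fun x hx hxq => ?_⟩
      have h1 := (hf x q).1
      have htri := dist_triangle (f x) p (f q)
      rw [← hdistfw] at h1
      have hL1 : L⁻¹ * (δ * ρ) < L⁻¹ * dist x q :=
        mul_lt_mul_of_pos_left hxq (by positivity)
      have hLinv : L⁻¹ * (δ * ρ) = δ * ρ / L := by field_simp
      have h2L : δ * ρ / (2 * L) * 2 = δ * ρ / L := by field_simp
      nlinarith
    · push_neg at hcase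
      refine ⟨w, hw, fun x hx _ => ?_⟩
      have := hcase x hx
      rwa [dist_comm] at this
  have hS := hsupp q
  set S := C ∩ (Metric.closedBall w (δ⁻¹ * ρ) \ Metric.closedBall q (δ * ρ)) with hSdef
  set T := (f '' C) ∩ (Metric.closedBall (f w) (δ'⁻¹ * ρ') \
      Metric.closedBall p (δ' * ρ')) with hTdef
  have hsub : f '' S ⊆ T := by
    rintro _ ⟨x, ⟨hxC, hxball, hxout⟩, rfl⟩
    refine ⟨⟨x, hxC, rfl⟩, ?_, ?_⟩
    · rw [Metric.mem_closedBall] at hxball ⊢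
      have h2 := (hf x w).2
      rw [← hdistfw] at h2
      calc dist (f x) (f w) ≤ L * dist x w := h2
        _ ≤ L * (δ⁻¹ * ρ) := mul_le_mul_of_nonneg_left hxball (le_of_lt hL0)
        _ ≤ δ'⁻¹ * ρ' := hkey2
    · rw [Metric.mem_closedBall] at hxout ⊢
      push_neg at hxout ⊢
      exact hq x hxC hxout
  have hTfin : T.Finite := (hCfin.image f).subset Set.inter_subset_left
  calc s ≤ (S.ncard : ℝ) := hS
    _ = ((f '' S).ncard : ℝ) := by rw [Set.ncard_image_of_injective S hinj]
    _ ≤ (T.ncard : ℝ) := Nat.cast_le.mpr (Set.ncard_le_ncard hsub hTfin)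
end

section
/- Let G be an infinite, locally finite simple graph whose valence is bounded by D (every vertex has at most D neighbors), and let 1 < p < ∞. If G is p-parabolic, then the Cheeger constant of G vanishes: h(G) = 0; that is, for every ε > 0 there exists a nonempty finite set A of vertices with |∂A| < ε·|A|, where ∂A is the set of edges of G having exactly one endpoint in A. -/
/-- The norm of the discrete gradient of `u` at the vertex `v`:
`|∇u(v)| = (Σ_{w ~ v} (u w − u v)²)^{1/2}`. -/
noncomputable def gradNorm {V : Type*} (G : SimpleGraph V) (u : V → ℝ) (v : V) : ℝ :=
  Real.sqrt (∑' w : G.neighborSet v, (u w - u v) ^ 2)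

/-- The `p`-energy of `u`: `E_p(u) = Σ_v |∇u(v)|^p`. -/
noncomputable def pEnergy {V : Type*} (p : ℝ) (G : SimpleGraph V) (u : V → ℝ) : ℝ :=
  ∑' v : V, gradNorm G u v ^ p

/-- The `p`-capacity of a set `S` of vertices:
the infimum of the `p`-energies of finitely supported functions that are `≥ 1` on `S`. -/
noncomputable def pCap {V : Type*} (p : ℝ) (G : SimpleGraph V) (S : Set V) : ℝ :=
  sInf {E : ℝ | ∃ u : V → ℝ, (Function.support u).Finite ∧
    (∀ v ∈ S, 1 ≤ u v) ∧ E = pEnergy p G u}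

/-- A graph is `p`-parabolic if every finite nonempty set of vertices has zero `p`-capacity. -/
def IsPParabolic {V : Type*} (p : ℝ) (G : SimpleGraph V) : Prop :=
  ∀ S : Set V, S.Finite → S.Nonempty → pCap p G S = 0

/-- The edge boundary of a set `A` of vertices: edges with exactly one endpoint in `A`. -/
def edgeBoundary {V : Type*} (G : SimpleGraph V) (A : Set V) : Set (Sym2 V) :=
  {e ∈ G.edgeSet | ∃ a b : V, e = s(a, b) ∧ a ∈ A ∧ b ∉ A}

/-- Counting the edge boundary of a finite set via ordered pairs. -/
private lemma myBoundaryCard {V : Type*} [DecidableEq V] (G : SimpleGraph V)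
    (hloc : ∀ v : V, (G.neighborSet v).Finite) (A : Finset V) :
    (edgeBoundary G (↑A : Set V)).ncard = ∑ v ∈ A, ((hloc v).toFinset \ A).card := by
  classical
  set P : Finset (V × V) := A.biUnion (fun v => ((hloc v).toFinset \ A).image fun w => (v, w))
    with hP
  have hPmem : ∀ z : V × V, z ∈ P ↔ z.1 ∈ A ∧ G.Adj z.1 z.2 ∧ z.2 ∉ A := by
    rintro ⟨x, y⟩
    simp only [hP, Finset.mem_biUnion, Finset.mem_image, Finset.mem_sdiff,
      Set.Finite.mem_toFinset, SimpleGraph.mem_neighborSet, Prod.mk.injEq]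
    constructor
    · rintro ⟨v, hv, w, ⟨hadj, hw⟩, rfl, rfl⟩
      exact ⟨hv, hadj, hw⟩
    · rintro ⟨hx, hadj, hy⟩
      exact ⟨x, hx, y, ⟨hadj, hy⟩, rfl, rfl⟩
  have hset : edgeBoundary G (↑A : Set V) = ↑(P.image fun z : V × V => s(z.1, z.2)) := by
    ext e
    simp only [edgeBoundary, Set.mem_setOf_eq, Finset.coe_image, Set.mem_image,
      Finset.mem_coe, Finset.mem_coe]
    constructor
    · rintro ⟨he, a, b, rfl, ha, hb⟩
      exact ⟨(a, b), (hPmem (a, b)).mpr ⟨ha, G.mem_edgeSet.mp he, hb⟩, rfl⟩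
    · rintro ⟨⟨a, b⟩, hz, rfl⟩
      obtain ⟨ha, hadj, hb⟩ := (hPmem (a, b)).mp hz
      exact ⟨G.mem_edgeSet.mpr hadj, a, b, rfl, ha, hb⟩
  rw [hset, Set.ncard_coe_finset]
  rw [Finset.card_image_of_injOn]
  · rw [hP, Finset.card_biUnion]
    · exact Finset.sum_congr rfl fun v hv =>
        Finset.card_image_of_injective _ (fun a b h => (Prod.ext_iff.mp h).2)
    · intro x hx y hy hxy
      rw [Function.onFun, Finset.disjoint_left]
      rintro z hzx hzy
      obtain ⟨w, -, rfl⟩ := Finset.mem_image.mp hzx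
      obtain ⟨w', -, hw'⟩ := Finset.mem_image.mp hzy
      exact hxy ((Prod.ext_iff.mp hw').1.symm)
  · intro z hz z' hz' hss
    obtain ⟨h1, h2, h3⟩ := (hPmem z).mp (by simpa using hz)
    obtain ⟨h1', h2', h3'⟩ := (hPmem z').mp (by simpa using hz')
    rcases Sym2.eq_iff.mp hss with ⟨ha, hb⟩ | ⟨ha, hb⟩
    · exact Prod.ext ha hb
    · exact absurd (ha ▸ h1) h3'

/-- Discrete co-area inequality: an isoperimetric inequality for sets implies an
`ℓ¹`-type inequality for nonnegative finitely supported functions. -/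
private lemma myCoarea {V : Type*} [DecidableEq V] (G : SimpleGraph V)
    (hloc : ∀ v : V, (G.neighborSet v).Finite) {ε : ℝ}
    (hε : ∀ A : Finset V, A.Nonempty →
      ε * A.card ≤ ∑ v ∈ A, (((hloc v).toFinset \ A).card : ℝ)) :
    ∀ (n : ℕ) (A : Finset V), A.card ≤ n → ∀ f : V → ℝ, (∀ v, 0 ≤ f v) →
      (∀ v, v ∉ A → f v = 0) →
      ε * ∑ v ∈ A, f v ≤ ∑ v ∈ A, ∑ w ∈ (hloc v).toFinset, max (f v - f w) 0 := by
  intro n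
  induction n with
  | zero =>
    intro A hA f hf hf0
    have : A = ∅ := Finset.card_eq_zero.mp (Nat.le_zero.mp hA)
    subst this; simp
  | succ n ih =>
    intro A hcard f hf hf0
    by_cases hz : ∃ v ∈ A, f v = 0
    · obtain ⟨v1, hv1A, hfv1⟩ := hz
      have h1 : ∑ v ∈ A.erase v1, f v = ∑ v ∈ A, f v := Finset.sum_erase _ hfv1
      have hcard' : (A.erase v1).card ≤ n := by
        rw [Finset.card_erase_of_mem hv1A]; omega
      have hf0' : ∀ v, v ∉ A.erase v1 → f v = 0 := by
        intro v hv
        rcases eq_or_ne v v1 with rfl | hne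
        · exact hfv1
        · exact hf0 v fun h => hv (Finset.mem_erase.mpr ⟨hne, h⟩)
      calc ε * ∑ v ∈ A, f v = ε * ∑ v ∈ A.erase v1, f v := by rw [h1]
        _ ≤ ∑ v ∈ A.erase v1, ∑ w ∈ (hloc v).toFinset, max (f v - f w) 0 :=
            ih (A.erase v1) hcard' f hf hf0'
        _ ≤ ∑ v ∈ A, ∑ w ∈ (hloc v).toFinset, max (f v - f w) 0 :=
            Finset.sum_le_sum_of_subset_of_nonneg (Finset.erase_subset _ _)
              (fun v _ _ => Finset.sum_nonneg fun w _ => le_max_right _ _)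
    · push_neg at hz
      rcases A.eq_empty_or_nonempty with rfl | hAne
      · simp
      obtain ⟨a0, ha0A, ha0min⟩ := A.exists_min_image f hAne
      set m := f a0 with hm
      have hm0 : 0 < m := (hf a0).lt_of_ne (Ne.symm (hz a0 ha0A))
      set f' : V → ℝ := fun v => max (f v - m) 0 with hf'def
      have hf'nonneg : ∀ v, 0 ≤ f' v := fun v => le_max_right _ _
      have hf'a0 : f' a0 = 0 := by simp [hf'def, le_of_eq hm.symm]
      have hf'0 : ∀ v, v ∉ A.erase a0 → f' v = 0 := by
        intro v hv
        rcases eq_or_ne v a0 with rfl | hne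
        · exact hf'a0
        · have hvA : v ∉ A := fun h => hv (Finset.mem_erase.mpr ⟨hne, h⟩)
          simp [hf'def, hf0 v hvA, hm0.le]
      have hcard' : (A.erase a0).card ≤ n := by
        rw [Finset.card_erase_of_mem ha0A]; omega
      have IH := ih (A.erase a0) hcard' f' hf'nonneg hf'0
      have key : ∀ v ∈ A, ∀ w : V,
          max (f v - f w) 0 = max (f' v - f' w) 0 + (if w ∈ A then 0 else m) := by
        intro v hv w
        have hmv : m ≤ f v := ha0min v hv
        by_cases hw : w ∈ A
        · have hmw : m ≤ f w := ha0min w hw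
          rw [if_pos hw, add_zero]
          have e1 : f' v = f v - m := max_eq_left (by linarith)
          have e2 : f' w = f w - m := max_eq_left (by linarith)
          rw [e1, e2]
          congr 1
          ring
        · rw [if_neg hw, hf0 w hw]
          have e1 : f' v = f v - m := max_eq_left (by linarith)
          have e2 : f' w = 0 := by
            simp [hf'def, hf0 w hw, hm0.le]
          rw [e1, e2]
          rw [max_eq_left (by linarith), max_eq_left (by linarith)]
          ring
      have hsum1 : ∑ v ∈ A, f v = (∑ v ∈ A, f' v) + m * A.card := by
        have h : ∀ v ∈ A, f v = f' v + m := by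
          intro v hv
          have hmv : m ≤ f v := ha0min v hv
          rw [hf'def]
          simp only []
          rw [max_eq_left (by linarith)]
          ring
        rw [Finset.sum_congr rfl h, Finset.sum_add_distrib, Finset.sum_const, nsmul_eq_mul]
        ring
      have hsum2 : ∑ v ∈ A, f' v = ∑ v ∈ A.erase a0, f' v :=
        (Finset.sum_erase _ hf'a0).symm
      have hRHS : ∑ v ∈ A, ∑ w ∈ (hloc v).toFinset, max (f v - f w) 0
          = (∑ v ∈ A, ∑ w ∈ (hloc v).toFinset, max (f' v - f' w) 0)
            + m * ∑ v ∈ A, (((hloc v).toFinset \ A).card : ℝ) := by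
        rw [Finset.mul_sum, ← Finset.sum_add_distrib]
        refine Finset.sum_congr rfl fun v hv => ?_
        rw [Finset.sum_congr rfl fun w _ => key v hv w, Finset.sum_add_distrib]
        congr 1
        rw [Finset.sum_ite, Finset.sum_const_zero, zero_add, Finset.sum_const, nsmul_eq_mul]
        rw [mul_comm]
        congr 2
        rw [Finset.sdiff_eq_filter]
      have hbd := hε A hAne
      have hmono : ∑ v ∈ A.erase a0, ∑ w ∈ (hloc v).toFinset, max (f' v - f' w) 0
          ≤ ∑ v ∈ A, ∑ w ∈ (hloc v).toFinset, max (f' v - f' w) 0 :=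
        Finset.sum_le_sum_of_subset_of_nonneg (Finset.erase_subset _ _)
          (fun v _ _ => Finset.sum_nonneg fun w _ => le_max_right _ _)
      have hbd' : ε * A.card * m ≤ (∑ v ∈ A, (((hloc v).toFinset \ A).card : ℝ)) * m :=
        mul_le_mul_of_nonneg_right hbd hm0.le
      calc ε * ∑ v ∈ A, f v
          = ε * ∑ v ∈ A.erase a0, f' v + ε * A.card * m := by rw [hsum1, hsum2]; ring
        _ ≤ (∑ v ∈ A.erase a0, ∑ w ∈ (hloc v).toFinset, max (f' v - f' w) 0)
            + (∑ v ∈ A, (((hloc v).toFinset \ A).card : ℝ)) * m := add_le_add IH hbd'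
        _ ≤ (∑ v ∈ A, ∑ w ∈ (hloc v).toFinset, max (f' v - f' w) 0)
            + (∑ v ∈ A, (((hloc v).toFinset \ A).card : ℝ)) * m := add_le_add_left hmono _
        _ = ∑ v ∈ A, ∑ w ∈ (hloc v).toFinset, max (f v - f w) 0 := by rw [hRHS]; ring

/-- `a^p - b^p ≤ p a^(p-1) (a-b)` for `0 ≤ b ≤ a` and `p ≥ 1`. -/
private lemma myRpowSub {a b : ℝ} (hb : 0 ≤ b) (hba : b ≤ a) {p : ℝ} (hp : 1 ≤ p) :
    a ^ p - b ^ p ≤ p * a ^ (p - 1) * (a - b) := by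
  rcases eq_or_lt_of_le (hb.trans hba) with h | ha
  · have hb0 : b = 0 := le_antisymm (h ▸ hba) hb
    subst hb0
    rw [← h]
    simp
  · have h1 : (-1 : ℝ) ≤ b / a - 1 := by
      have : 0 ≤ b / a := div_nonneg hb ha.le
      linarith
    have h2 := one_add_mul_self_le_rpow_one_add h1 hp
    have h3 : (1 + (b / a - 1)) = b / a := by ring
    rw [h3] at h2
    have h4 : (b / a) ^ p = b ^ p / a ^ p := Real.div_rpow hb ha.le p
    have h5 : (0 : ℝ) < a ^ p := Real.rpow_pos_of_pos ha p
    have h6 : a ^ (p - 1) * a = a ^ p := by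
      rw [← Real.rpow_add_one (ne_of_gt ha) (p - 1)]
      ring_nf
    have h7 : (1 + p * (b / a - 1)) * a ^ p ≤ b ^ p := by
      rw [h4] at h2
      calc (1 + p * (b / a - 1)) * a ^ p ≤ b ^ p / a ^ p * a ^ p :=
            mul_le_mul_of_nonneg_right h2 h5.le
        _ = b ^ p := div_mul_cancel₀ _ (ne_of_gt h5)
    have h8 : b / a * a ^ p = b * a ^ (p - 1) := by
      rw [← h6]
      field_simp
    nlinarith [h7, h8, h6]

/-- An infinite graph of valence at most `D` which is `p`-parabolic for some `1 < p < ∞`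
has vanishing Cheeger constant. -/
theorem pParabolic_cheeger_zero {V : Type*} [Infinite V] (G : SimpleGraph V)
    (D : ℕ) (hloc : ∀ v : V, (G.neighborSet v).Finite)
    (hdeg : ∀ v : V, (G.neighborSet v).ncard ≤ D)
    (p : ℝ) (hp : 1 < p) (hpar : IsPParabolic p G) :
    ∀ ε : ℝ, 0 < ε → ∃ A : Set V, A.Finite ∧ A.Nonempty ∧
      ((edgeBoundary G A).ncard : ℝ) < ε * A.ncard := by
  classical
  intro ε hε
  by_contra hcon
  push_neg at hcon
  -- Finset form of the isoperimetric hypothesis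
  have hC : ∀ A : Finset V, A.Nonempty →
      ε * A.card ≤ ∑ v ∈ A, (((hloc v).toFinset \ A).card : ℝ) := by
    intro A hA
    have h1 := hcon (↑A : Set V) (A.finite_toSet) (by exact_mod_cast hA)
    rw [Set.ncard_coe_finset, myBoundaryCard G hloc A] at h1
    push_cast at h1
    exact h1
  set q : ℝ := p / (p - 1) with hqdef
  have hpq : p.HolderConjugate q := Real.HolderConjugate.conjExponent hp
  have hp0 : 0 < p := hpq.pos
  have hq0 : 0 < q := hpq.symm.pos
  set Dr : ℝ := (D : ℝ) + 1 with hDrdef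
  have hDr0 : 0 < Dr := by positivity
  set δq : ℝ := 4 * Dr * p / (ε * q) with hδqdef
  have hδq0 : 0 < δq := by positivity
  set δ : ℝ := δq ^ (1 / q) with hδdef
  have hδ0 : 0 < δ := Real.rpow_pos_of_pos hδq0 _
  have hδqq : δ ^ q = δq := by
    rw [hδdef, ← Real.rpow_mul hδq0.le, one_div_mul_cancel hq0.ne', Real.rpow_one]
  set c : ℝ := ε / (2 * δ ^ p * Dr) with hcdef
  have hδp0 : 0 < δ ^ p := Real.rpow_pos_of_pos hδ0 _
  have hc0 : 0 < c := by positivity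
  obtain ⟨v0⟩ : Nonempty V := inferInstance
  -- The key energy lower bound
  have hkey : ∀ u : V → ℝ, (Function.support u).Finite → 1 ≤ u v0 → c ≤ pEnergy p G u := by
    intro u hsupp hu1
    set g : V → ℝ := fun v => |u v| with hgdef
    set f : V → ℝ := fun v => g v ^ p with hfdef
    have hf0 : ∀ v, 0 ≤ f v := fun v => Real.rpow_nonneg (abs_nonneg _) _
    set F : Finset V := hsupp.toFinset with hFdef
    have hFmem : ∀ v, v ∈ F ↔ u v ≠ 0 := fun v => by
      simp [hFdef, Function.mem_support]
    have hfvanish : ∀ v, v ∉ F → f v = 0 := by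
      intro v hv
      have huv : u v = 0 := by
        by_contra h
        exact hv ((hFmem v).mpr h)
      simp [hfdef, hgdef, huv, Real.zero_rpow hp0.ne']
    set N : V → Finset V := fun v => (hloc v).toFinset with hNdef
    have hNmem : ∀ v w, w ∈ N v ↔ G.Adj v w := fun v w => by
      simp [hNdef, SimpleGraph.mem_neighborSet]
    have hNcard : ∀ v, ((N v).card : ℝ) ≤ Dr := by
      intro v
      have h1 := hdeg v
      have h2 : (G.neighborSet v).ncard = (N v).card := by
        rw [hNdef]
        exact Set.ncard_eq_toFinset_card _ (hloc v)
      rw [h2] at h1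
      rw [hDrdef]
      exact_mod_cast Nat.le_succ_of_le h1
    set S : ℝ := ∑ v ∈ F, f v with hSdef
    have hS1 : (1 : ℝ) ≤ S := by
      have hv0F : v0 ∈ F := (hFmem v0).mpr (by intro h; rw [h] at hu1; linarith)
      have h1 : (1 : ℝ) ≤ f v0 := by
        have habs : (1 : ℝ) ≤ |u v0| := le_trans hu1 (le_abs_self _)
        calc (1 : ℝ) = 1 ^ p := (Real.one_rpow p).symm
          _ ≤ |u v0| ^ p := Real.rpow_le_rpow zero_le_one habs hp0.le
      calc (1 : ℝ) ≤ f v0 := h1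
        _ ≤ S := Finset.single_le_sum (fun v _ => hf0 v) hv0F
    have hT := myCoarea G hloc hC F.card F le_rfl f hf0 hfvanish
    set E : ℝ := pEnergy p G u with hEdef
    have hgradnn : ∀ v, 0 ≤ gradNorm G u v := fun v => Real.sqrt_nonneg _
    have hEnn : ∀ v, 0 ≤ gradNorm G u v ^ p := fun v => Real.rpow_nonneg (hgradnn v) _
    set K : Finset V := F ∪ F.biUnion N with hKdef
    have hgradzero : ∀ v, v ∉ K → gradNorm G u v ^ p = 0 := by
      intro v hv
      have huv : u v = 0 := by
        by_contra h
        exact hv (Finset.mem_union_left _ ((hFmem v).mpr h))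
      have hngh : ∀ w : G.neighborSet v, u (w : V) = 0 := by
        rintro ⟨w, hw⟩
        by_contra hne
        have hwF : w ∈ F := (hFmem w).mpr hne
        have hvN : v ∈ N w := (hNmem w v).mpr (G.adj_symm hw)
        exact hv (Finset.mem_union_right _ (Finset.mem_biUnion.mpr ⟨w, hwF, hvN⟩))
      have hg0 : gradNorm G u v = 0 := by
        unfold gradNorm
        have hzero : (fun w : G.neighborSet v => (u (w : V) - u v) ^ 2) = fun _ => (0 : ℝ) :=
          funext fun w => by rw [hngh w, huv]; ring
        rw [hzero, tsum_zero, Real.sqrt_zero]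
      rw [hg0]
      exact Real.zero_rpow hp0.ne'
    have hsummable : Summable (fun v => gradNorm G u v ^ p) :=
      summable_of_ne_finset_zero hgradzero
    have hEF : ∑ v ∈ F, gradNorm G u v ^ p ≤ E :=
      hsummable.sum_le_tsum F (fun v _ => hEnn v)
    -- single-edge bound on the gradient
    have hgradsingle : ∀ v w, w ∈ N v → |u v - u w| ≤ gradNorm G u v := by
      intro v w hw
      have hw' : w ∈ G.neighborSet v := (hNmem v w).mp hw
      haveI : Fintype (G.neighborSet v) := (hloc v).fintype
      unfold gradNorm
      rw [tsum_fintype]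
      have h1 : (u w - u v) ^ 2 ≤ ∑ x : G.neighborSet v, (u (x : V) - u v) ^ 2 :=
        Finset.single_le_sum (f := fun x : G.neighborSet v => (u (x : V) - u v) ^ 2)
          (fun x _ => sq_nonneg _) (Finset.mem_univ ⟨w, hw'⟩)
      calc |u v - u w| = Real.sqrt ((u w - u v) ^ 2) := by
            rw [Real.sqrt_sq_eq_abs, abs_sub_comm]
        _ ≤ _ := Real.sqrt_le_sqrt h1
    -- pointwise pair bound
    have hpair : ∀ v ∈ F, ∀ w ∈ N v,
        max (f v - f w) 0 ≤ ε / (4 * Dr) * (f v + f w) + δ ^ p * gradNorm G u v ^ p := by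
      intro v hvF w hwN
      have hcoefnn : (0 : ℝ) ≤ ε / (4 * Dr) := by positivity
      rcases le_total (g v) (g w) with hle | hle
      · have hfle : f v ≤ f w := Real.rpow_le_rpow (abs_nonneg _) hle hp0.le
        rw [max_eq_right (by linarith)]
        have := hEnn v
        have := hf0 v
        have := hf0 w
        positivity
      · -- g w ≤ g v
        have hfle : f w ≤ f v := Real.rpow_le_rpow (abs_nonneg _) hle hp0.le
        rw [max_eq_left (by linarith)]
        set d : ℝ := |u v - u w| with hddef
        have hd0 : 0 ≤ d := abs_nonneg _
        have hgrad := hgradsingle v w hwN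
        have hkey1 : f v - f w ≤ p * g v ^ (p - 1) * (g v - g w) :=
          myRpowSub (abs_nonneg _) hle hp.le
        have h2 : g v - g w ≤ d := by
          simp only [hgdef, hddef]
          exact abs_sub_abs_le_abs_sub _ _
        have h3 : f v - f w ≤ p * g v ^ (p - 1) * d := by
          have hnn : (0 : ℝ) ≤ p * g v ^ (p - 1) := by
            have := Real.rpow_nonneg (abs_nonneg (u v)) (p - 1)
            positivity
          calc f v - f w ≤ p * g v ^ (p - 1) * (g v - g w) := hkey1
            _ ≤ p * g v ^ (p - 1) * d := mul_le_mul_of_nonneg_left h2 hnn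
        set X : ℝ := g v ^ (p - 1) / δ with hXdef
        have hX0 : 0 ≤ X := by
          have := Real.rpow_nonneg (abs_nonneg (u v)) (p - 1)
          positivity
        have hY := Real.young_inequality_of_nonneg
          (mul_nonneg hδ0.le hd0) hX0 hpq
        have e5 : p * g v ^ (p - 1) * d = p * (δ * d * X) := by
          rw [hXdef]
          field_simp
        have e1 : (δ * d) ^ p = δ ^ p * d ^ p := Real.mul_rpow hδ0.le hd0
        have e2 : X ^ q = f v / δq := by
          rw [hXdef, Real.div_rpow (Real.rpow_nonneg (abs_nonneg _) _) hδ0.le, hδqq]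
          congr 1
          rw [← Real.rpow_mul (abs_nonneg _), hpq.sub_one_mul_conj]
        have e3 : d ^ p ≤ gradNorm G u v ^ p := Real.rpow_le_rpow hd0 hgrad hp0.le
        have e4 : p / q / δq = ε / (4 * Dr) := by
          rw [hδqdef]
          field_simp
        have e6 : p * ((δ * d) ^ p / p + X ^ q / q) = (δ * d) ^ p + p / q * X ^ q := by
          field_simp
        calc f v - f w ≤ p * g v ^ (p - 1) * d := h3
          _ = p * (δ * d * X) := e5
          _ ≤ p * ((δ * d) ^ p / p + X ^ q / q) :=
              mul_le_mul_of_nonneg_left hY hp0.le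
          _ = (δ * d) ^ p + p / q * X ^ q := e6
          _ = δ ^ p * d ^ p + p / q / δq * f v := by
              rw [e1, e2]; ring
          _ = δ ^ p * d ^ p + ε / (4 * Dr) * f v := by rw [e4]
          _ ≤ δ ^ p * gradNorm G u v ^ p + ε / (4 * Dr) * (f v + f w) := by
              have hfw := hf0 w
              have h7 : ε / (4 * Dr) * f v ≤ ε / (4 * Dr) * (f v + f w) :=
                mul_le_mul_of_nonneg_left (by linarith) hcoefnn
              have h8 : δ ^ p * d ^ p ≤ δ ^ p * gradNorm G u v ^ p :=
                mul_le_mul_of_nonneg_left e3 hδp0.le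
              linarith
          _ = ε / (4 * Dr) * (f v + f w) + δ ^ p * gradNorm G u v ^ p := by ring
    -- summed bounds
    have hTle : ε * S ≤ ∑ v ∈ F, ∑ w ∈ N v,
        (ε / (4 * Dr) * (f v + f w) + δ ^ p * gradNorm G u v ^ p) :=
      hT.trans (Finset.sum_le_sum fun v hv => Finset.sum_le_sum fun w hw => hpair v hv w hw)
    have hexp : ∑ v ∈ F, ∑ w ∈ N v,
        (ε / (4 * Dr) * (f v + f w) + δ ^ p * gradNorm G u v ^ p)
        = ε / (4 * Dr) * (∑ v ∈ F, ∑ w ∈ N v, (f v + f w))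
          + δ ^ p * (∑ v ∈ F, ∑ w ∈ N v, gradNorm G u v ^ p) := by
      rw [Finset.mul_sum, Finset.mul_sum, ← Finset.sum_add_distrib]
      refine Finset.sum_congr rfl fun v hv => ?_
      rw [Finset.mul_sum, Finset.mul_sum, ← Finset.sum_add_distrib]
    have hB3 : ∑ v ∈ F, ∑ w ∈ N v, gradNorm G u v ^ p ≤ Dr * E := by
      calc ∑ v ∈ F, ∑ w ∈ N v, gradNorm G u v ^ p
          = ∑ v ∈ F, ((N v).card : ℝ) * gradNorm G u v ^ p := by
            refine Finset.sum_congr rfl fun v hv => ?_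
            rw [Finset.sum_const, nsmul_eq_mul]
        _ ≤ ∑ v ∈ F, Dr * gradNorm G u v ^ p :=
            Finset.sum_le_sum fun v hv =>
              mul_le_mul_of_nonneg_right (hNcard v) (hEnn v)
        _ = Dr * ∑ v ∈ F, gradNorm G u v ^ p := by rw [Finset.mul_sum]
        _ ≤ Dr * E := mul_le_mul_of_nonneg_left hEF hDr0.le
    have hB1a : ∑ v ∈ F, ∑ w ∈ N v, f v ≤ Dr * S := by
      calc ∑ v ∈ F, ∑ w ∈ N v, f v
          = ∑ v ∈ F, ((N v).card : ℝ) * f v := by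
            refine Finset.sum_congr rfl fun v hv => ?_
            rw [Finset.sum_const, nsmul_eq_mul]
        _ ≤ ∑ v ∈ F, Dr * f v :=
            Finset.sum_le_sum fun v hv =>
              mul_le_mul_of_nonneg_right (hNcard v) (hf0 v)
        _ = Dr * S := by rw [hSdef, Finset.mul_sum]
    have hswap : ∑ v ∈ F, ∑ w ∈ N v, f w
        = ∑ w ∈ F.biUnion N, ∑ v ∈ F ∩ N w, f w := by
      refine Finset.sum_comm' ?_
      intro v w
      constructor
      · rintro ⟨hv, hw⟩
        exact ⟨Finset.mem_inter.mpr ⟨hv, (hNmem w v).mpr (G.adj_symm ((hNmem v w).mp hw))⟩,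
          Finset.mem_biUnion.mpr ⟨v, hv, hw⟩⟩
      · rintro ⟨hv, hw⟩
        obtain ⟨hv1, hv2⟩ := Finset.mem_inter.mp hv
        exact ⟨hv1, (hNmem v w).mpr (G.adj_symm ((hNmem w v).mp hv2))⟩
    have hB1b : ∑ v ∈ F, ∑ w ∈ N v, f w ≤ Dr * S := by
      rw [hswap]
      have step1 : ∑ w ∈ F.biUnion N, ∑ v ∈ F ∩ N w, f w
          ≤ ∑ w ∈ F.biUnion N, Dr * f w := by
        refine Finset.sum_le_sum fun w hw => ?_
        rw [Finset.sum_const, nsmul_eq_mul]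
        refine mul_le_mul_of_nonneg_right ?_ (hf0 w)
        calc ((F ∩ N w).card : ℝ) ≤ ((N w).card : ℝ) := by
              exact_mod_cast Finset.card_le_card (Finset.inter_subset_right)
          _ ≤ Dr := hNcard w
      have step2 : ∑ w ∈ F.biUnion N, f w ≤ S := by
        have hsub : ∑ w ∈ F.biUnion N, f w ≤ ∑ w ∈ F.biUnion N ∪ F, f w :=
          Finset.sum_le_sum_of_subset_of_nonneg Finset.subset_union_left
            (fun i _ _ => hf0 i)
        have hequ : ∑ w ∈ F.biUnion N ∪ F, f w = S := by
          rw [hSdef]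
          exact (Finset.sum_subset Finset.subset_union_right
            (fun x _ hx => hfvanish x hx)).symm
        linarith
      calc ∑ w ∈ F.biUnion N, ∑ v ∈ F ∩ N w, f w ≤ ∑ w ∈ F.biUnion N, Dr * f w := step1
        _ = Dr * ∑ w ∈ F.biUnion N, f w := by rw [Finset.mul_sum]
        _ ≤ Dr * S := mul_le_mul_of_nonneg_left step2 hDr0.le
    have hB1 : ∑ v ∈ F, ∑ w ∈ N v, (f v + f w) ≤ 2 * Dr * S := by
      have : ∑ v ∈ F, ∑ w ∈ N v, (f v + f w)
          = (∑ v ∈ F, ∑ w ∈ N v, f v) + ∑ v ∈ F, ∑ w ∈ N v, f w := by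
        rw [← Finset.sum_add_distrib]
        refine Finset.sum_congr rfl fun v hv => ?_
        rw [← Finset.sum_add_distrib]
      rw [this]
      linarith
    -- combine everything
    have hfinal : ε * S ≤ ε / (4 * Dr) * (2 * Dr * S) + δ ^ p * (Dr * E) := by
      have hcoefnn : (0 : ℝ) ≤ ε / (4 * Dr) := by positivity
      calc ε * S ≤ ε / (4 * Dr) * (∑ v ∈ F, ∑ w ∈ N v, (f v + f w))
            + δ ^ p * (∑ v ∈ F, ∑ w ∈ N v, gradNorm G u v ^ p) := by
            rw [← hexp]; exact hTle
        _ ≤ ε / (4 * Dr) * (2 * Dr * S) + δ ^ p * (Dr * E) :=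
            add_le_add (mul_le_mul_of_nonneg_left hB1 hcoefnn)
              (mul_le_mul_of_nonneg_left hB3 hδp0.le)
    have hhalf : ε / (4 * Dr) * (2 * Dr * S) = ε / 2 * S := by
      field_simp
      ring
    rw [hhalf] at hfinal
    -- ε S ≤ (ε/2) S + δ^p Dr E ⟹ ε/2 ≤ δ^p Dr E
    have h9 : ε / 2 * S ≤ δ ^ p * (Dr * E) := by linarith [hfinal]
    have h10 : ε / 2 ≤ ε / 2 * S := by
      have := mul_le_mul_of_nonneg_left hS1 (le_of_lt (half_pos hε))
      simpa using this
    have h11 : ε / 2 ≤ δ ^ p * Dr * E := by rw [mul_assoc]; linarith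
    have hX0 : (0:ℝ) < δ ^ p * Dr := by positivity
    have hc2 : c = (ε / 2) / (δ ^ p * Dr) := by rw [hcdef, div_div, mul_assoc]
    rw [hc2, div_le_iff₀ hX0]
    calc ε / 2 ≤ δ ^ p * Dr * E := h11
      _ = E * (δ ^ p * Dr) := mul_comm _ _
  -- derive the contradiction
  have hzero := hpar {v0} (Set.finite_singleton v0) ⟨v0, rfl⟩
  have hle : c ≤ pCap p G {v0} := by
    apply le_csInf
    · refine ⟨pEnergy p G (fun v => if v = v0 then 1 else 0),
        fun v => if v = v0 then 1 else 0, ?_, ?_, rfl⟩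
      · refine (Set.finite_singleton v0).subset ?_
        intro x hx
        rw [Function.mem_support] at hx
        by_contra h
        simp only [Set.mem_singleton_iff] at h
        simp [h] at hx
      · intro v hv
        rw [Set.mem_singleton_iff] at hv
        simp [hv]
    · rintro E ⟨u, hu1, hu2, rfl⟩
      exact hkey u hu1 (hu2 v0 rfl)
  rw [hzero] at hle
  linarith
end
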